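/- arXiv:1401.0020 — 2 statements merged into one kernel-verified Lean document; each statement's English description precedes it below -/
import Mathlib

section
/- Uniqueness of the class-P solution to the HJB equation: suppose V°, V̂ ∈ P both satisfy the HJB equation H(V)(x) = 0 for all x ∈ R^n, where H(V) = ∇Vᵀf + q - (1/4)∇Vᵀg R⁻¹ gᵀ∇V. Assume each induced closed-loop system (with feedback -(1/2)R⁻¹gᵀ∇V) is globally asymptotically stable and each function equals the cost of its induced policy. Then V° = V̂ on R^n. -/
open Matrix Filter MeasureTheory

/-- The gradient of `V : ℝⁿ → ℝ` at `y`, as a vector. -/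
noncomputable def grad {n : ℕ} (V : (Fin n → ℝ) → ℝ) (y : Fin n → ℝ) : Fin n → ℝ :=
  fun i => fderiv ℝ V y (Pi.single i 1)

/-- The origin is a globally asymptotically stable equilibrium of `ẋ = F(x)`. -/
def GloballyAsymptoticallyStable {n : ℕ} (F : (Fin n → ℝ) → (Fin n → ℝ)) : Prop :=
  (∀ ε > (0:ℝ), ∃ δ > (0:ℝ), ∀ x : ℝ → (Fin n → ℝ),
      (∀ t, HasDerivAt x (F (x t)) t) → ‖x 0‖ < δ → ∀ t ≥ (0:ℝ), ‖x t‖ < ε) ∧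
  (∀ x : ℝ → (Fin n → ℝ), (∀ t, HasDerivAt x (F (x t)) t) →
      Tendsto x atTop (nhds 0))

lemma fderiv_apply_eq_dot {n : ℕ} (U : (Fin n → ℝ) → ℝ) (y v : Fin n → ℝ) :
    fderiv ℝ U y v = grad U y ⬝ᵥ v := by
  have hv : v = ∑ i, v i • (Pi.single i 1 : Fin n → ℝ) := by
    funext j
    simp [Pi.single_apply, Finset.sum_apply]
  conv_lhs => rw [hv]
  rw [map_sum]
  simp only [_root_.map_smul, smul_eq_mul]
  simp [grad, dotProduct, mul_comm]

lemma grad_continuous {n : ℕ} {U : (Fin n → ℝ) → ℝ} (hU : ContDiff ℝ 1 U) :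
    Continuous (grad U) := by
  have h := hU.continuous_fderiv one_ne_zero
  exact continuous_pi fun i =>
    (ContinuousLinearMap.apply ℝ ℝ (Pi.single i 1 : Fin n → ℝ)).continuous.comp h

lemma cont_mulVec {α : Type*} [TopologicalSpace α] {a b : ℕ}
    {M : α → Matrix (Fin a) (Fin b) ℝ} {v : α → Fin b → ℝ}
    (hM : ∀ i j, Continuous fun x => M x i j) (hv : Continuous v) :
    Continuous fun x => M x *ᵥ v x := by
  apply continuous_pi; intro i
  simp only [Matrix.mulVec, dotProduct]
  exact continuous_finset_sum _ fun j _ => (hM i j).mul ((continuous_apply j).comp hv)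

lemma cont_dot {α : Type*} [TopologicalSpace α] {b : ℕ}
    {v w : α → Fin b → ℝ} (hv : Continuous v) (hw : Continuous w) :
    Continuous fun x => v x ⬝ᵥ w x := by
  simp only [dotProduct]
  exact continuous_finset_sum _ fun j _ =>
    ((continuous_apply j).comp hv).mul ((continuous_apply j).comp hw)

lemma hjb_dot {n m : ℕ} (R : Matrix (Fin m) (Fin m) ℝ) (hRsymm : R.IsSymm) (hRpd : R.PosDef)
    (p fv : Fin n → ℝ) (G : Matrix (Fin n) (Fin m) ℝ) (qv : ℝ)
    (hHJB : p ⬝ᵥ fv + qv - (1/4) * (p ⬝ᵥ (G *ᵥ (R⁻¹ *ᵥ (Gᵀ *ᵥ p)))) = 0)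
    (u : Fin m → ℝ) :
    p ⬝ᵥ (fv + G *ᵥ u)
      = -(qv + u ⬝ᵥ (R *ᵥ u))
        + (u - (-(1/2):ℝ) • (R⁻¹ *ᵥ (Gᵀ *ᵥ p))) ⬝ᵥ
            (R *ᵥ (u - (-(1/2):ℝ) • (R⁻¹ *ᵥ (Gᵀ *ᵥ p)))) := by
  have hRdet : IsUnit R.det := isUnit_iff_ne_zero.mpr hRpd.det_pos.ne'
  have h1 : R * R⁻¹ = 1 := Matrix.mul_nonsing_inv R hRdet
  have hRT : Rᵀ = R := hRsymm
  set w : Fin m → ℝ := Gᵀ *ᵥ p with hw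
  have key1 : ∀ z, p ⬝ᵥ (G *ᵥ z) = w ⬝ᵥ z := fun z => by
    rw [dotProduct_mulVec, ← mulVec_transpose]
  have key2 : ∀ z, (R⁻¹ *ᵥ w) ⬝ᵥ (R *ᵥ z) = w ⬝ᵥ z := fun z => by
    rw [dotProduct_mulVec, ← mulVec_transpose, hRT, mulVec_mulVec, h1, one_mulVec]
  have key3 : ∀ z : Fin m → ℝ, z ⬝ᵥ (R *ᵥ (R⁻¹ *ᵥ w)) = z ⬝ᵥ w := fun z => by
    rw [mulVec_mulVec, h1, one_mulVec]
  have hpf : p ⬝ᵥ fv = -qv + (1/4) * (w ⬝ᵥ (R⁻¹ *ᵥ w)) := by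
    have := key1 (R⁻¹ *ᵥ w); linarith [hHJB, this]
  have expand : (u - (-(1/2):ℝ) • (R⁻¹ *ᵥ w)) ⬝ᵥ (R *ᵥ (u - (-(1/2):ℝ) • (R⁻¹ *ᵥ w)))
      = u ⬝ᵥ (R *ᵥ u) + w ⬝ᵥ u + (1/4) * (w ⬝ᵥ (R⁻¹ *ᵥ w)) := by
    rw [Matrix.mulVec_sub, Matrix.mulVec_smul, dotProduct_sub, sub_dotProduct,
      sub_dotProduct, smul_dotProduct, smul_dotProduct, dotProduct_smul, dotProduct_smul,
      key2, key2, key3 u, dotProduct_comm u w]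
    simp only [smul_eq_mul]
    ring
  rw [dotProduct_add, key1, hpf, expand]
  ring

lemma cost_le {n m : ℕ}
    (f : (Fin n → ℝ) → (Fin n → ℝ)) (hfc : Continuous f)
    (g : (Fin n → ℝ) → Matrix (Fin n) (Fin m) ℝ) (hgc : ∀ i j, Continuous fun y => g y i j)
    (R : Matrix (Fin m) (Fin m) ℝ) (hRsymm : R.IsSymm) (hRpd : R.PosDef)
    (q : (Fin n → ℝ) → ℝ) (hqc : Continuous q) (hq0 : ∀ y, 0 ≤ q y)
    (U : (Fin n → ℝ) → ℝ) (hU : ContDiff ℝ 1 U) (hU0 : U 0 = 0)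
    (hHJBU : ∀ y, grad U y ⬝ᵥ f y + q y
      - (1/4) * (grad U y ⬝ᵥ (g y *ᵥ (R⁻¹ *ᵥ ((g y)ᵀ *ᵥ grad U y)))) = 0)
    (u : (Fin n → ℝ) → Fin m → ℝ) (hu : Continuous u)
    (x : ℝ → Fin n → ℝ)
    (hx : ∀ t, HasDerivAt x (f (x t) + g (x t) *ᵥ u (x t)) t)
    (hxlim : Tendsto x atTop (nhds 0))
    (hint : IntegrableOn (fun t => q (x t) + u (x t) ⬝ᵥ (R *ᵥ u (x t))) (Set.Ioi 0)) :
    U (x 0) ≤ ∫ t in Set.Ioi (0:ℝ), (q (x t) + u (x t) ⬝ᵥ (R *ᵥ u (x t))) := by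
  set h : ℝ → ℝ := fun t => q (x t) + u (x t) ⬝ᵥ (R *ᵥ u (x t)) with hh
  set uo : (Fin n → ℝ) → Fin m → ℝ :=
    fun y => (-(1/2):ℝ) • (R⁻¹ *ᵥ ((g y)ᵀ *ᵥ grad U y)) with huo
  set e : ℝ → ℝ := fun t => (u (x t) - uo (x t)) ⬝ᵥ (R *ᵥ (u (x t) - uo (x t))) with he
  have hxc : Continuous x := by
    rw [continuous_iff_continuousAt]; exact fun t => (hx t).continuousAt
  -- continuity facts
  have hgradc : Continuous (grad U) := grad_continuous hU
  have huoc : Continuous fun t => uo (x t) := by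
    apply Continuous.fun_const_smul
    exact cont_mulVec (M := fun _ => R⁻¹) (fun i j => continuous_const)
      (cont_mulVec (fun i j => (hgc j i).comp hxc) (hgradc.comp hxc))
  have huc : Continuous fun t => u (x t) := hu.comp hxc
  have hec : Continuous e := by
    apply cont_dot (huc.sub huoc)
    exact cont_mulVec (M := fun _ => R) (fun i j => continuous_const) (huc.sub huoc)
  have hhc : Continuous h := by
    apply (hqc.comp hxc).add
    exact cont_dot huc (cont_mulVec (M := fun _ => R) (fun i j => continuous_const) huc)
  -- nonnegativity
  have hRps := hRpd.posSemidef
  have hquad : ∀ z : Fin m → ℝ, 0 ≤ z ⬝ᵥ (R *ᵥ z) := fun z => by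
    simpa using hRps.dotProduct_mulVec_nonneg z
  have hepos : ∀ t, 0 ≤ e t := fun t => hquad _
  have hhpos : ∀ t, 0 ≤ h t := fun t => add_nonneg (hq0 _) (hquad _)
  -- the derivative of U ∘ x
  have hderiv : ∀ t, HasDerivAt (fun s => U (x s)) (-(h t) + e t) t := by
    intro t
    have hd := ((hU.differentiable one_ne_zero) (x t)).hasFDerivAt.comp_hasDerivAt t (hx t)
    have heq : fderiv ℝ U (x t) (f (x t) + g (x t) *ᵥ u (x t)) = -(h t) + e t := by
      rw [fderiv_apply_eq_dot]
      exact hjb_dot R hRsymm hRpd _ _ _ _ (hHJBU (x t)) (u (x t))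
    rwa [heq] at hd
  -- key inequality for each T ≥ 0
  have hkey : ∀ T : ℝ, 0 ≤ T → U (x 0) ≤ U (x T) + ∫ t in Set.Ioi (0:ℝ), h t := by
    intro T hT
    have hFTC : U (x T) - U (x 0) = ∫ t in (0:ℝ)..T, (-(h t) + e t) := by
      exact (intervalIntegral.integral_eq_sub_of_hasDerivAt (fun t _ => hderiv t)
        (((hhc.neg).add hec).intervalIntegrable 0 T)).symm
    have hsplit : ∫ t in (0:ℝ)..T, (-(h t) + e t)
        = -(∫ t in (0:ℝ)..T, h t) + ∫ t in (0:ℝ)..T, e t := by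
      rw [intervalIntegral.integral_add (f := fun t => -(h t)) ((hhc.neg).intervalIntegrable 0 T)
        (hec.intervalIntegrable 0 T), intervalIntegral.integral_neg]
    have hmono : ∫ t in (0:ℝ)..T, h t ≤ ∫ t in Set.Ioi (0:ℝ), h t := by
      rw [intervalIntegral.integral_of_le hT]
      apply setIntegral_mono_set hint (ae_of_all _ hhpos)
      exact HasSubset.Subset.eventuallyLE Set.Ioc_subset_Ioi_self
    have hepos' : 0 ≤ ∫ t in (0:ℝ)..T, e t :=
      intervalIntegral.integral_nonneg hT (fun t _ => hepos t)
    have := hFTC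
    rw [hsplit] at this
    linarith
  -- pass to the limit
  have hlim : Tendsto (fun T => U (x T) + ∫ t in Set.Ioi (0:ℝ), h t) atTop
      (nhds (0 + ∫ t in Set.Ioi (0:ℝ), h t)) := by
    apply Tendsto.add_const
    have : Tendsto (fun T => U (x T)) atTop (nhds (U 0)) :=
      (hU.continuous.tendsto 0).comp hxlim
    rwa [hU0] at this
  have hle : U (x 0) ≤ 0 + ∫ t in Set.Ioi (0:ℝ), h t := by
    refine ge_of_tendsto hlim ?_
    filter_upwards [eventually_ge_atTop (0:ℝ)] with T hT
    exact hkey T hT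
  rw [zero_add] at hle
  exact hle

lemma le_of_cost {n m : ℕ}
    (f : (Fin n → ℝ) → (Fin n → ℝ)) (hfc : Continuous f)
    (g : (Fin n → ℝ) → Matrix (Fin n) (Fin m) ℝ) (hgc : ∀ i j, Continuous fun y => g y i j)
    (R : Matrix (Fin m) (Fin m) ℝ) (hRsymm : R.IsSymm) (hRpd : R.PosDef)
    (q : (Fin n → ℝ) → ℝ) (hqc : Continuous q) (hq0 : ∀ y, 0 ≤ q y)
    (U : (Fin n → ℝ) → ℝ) (hU : ContDiff ℝ 1 U) (hU0 : U 0 = 0)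
    (hHJBU : ∀ y, grad U y ⬝ᵥ f y + q y
      - (1/4) * (grad U y ⬝ᵥ (g y *ᵥ (R⁻¹ *ᵥ ((g y)ᵀ *ᵥ grad U y)))) = 0)
    (W : (Fin n → ℝ) → ℝ) (hW0 : W 0 = 0) (hWpos : ∀ y ≠ 0, 0 < W y)
    (u : (Fin n → ℝ) → Fin m → ℝ) (hu : Continuous u)
    (x₀ : Fin n → ℝ) (x : ℝ → Fin n → ℝ)
    (hx : ∀ t, HasDerivAt x (f (x t) + g (x t) *ᵥ u (x t)) t)
    (hx0 : x 0 = x₀) (hxl : Tendsto x atTop (nhds 0))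
    (hWx : W x₀ = ∫ t in Set.Ioi (0:ℝ), (q (x t) + u (x t) ⬝ᵥ (R *ᵥ u (x t)))) :
    U x₀ ≤ W x₀ := by
  by_cases hI : IntegrableOn (fun t => q (x t) + u (x t) ⬝ᵥ (R *ᵥ u (x t))) (Set.Ioi 0)
  · have := cost_le f hfc g hgc R hRsymm hRpd q hqc hq0 U hU hU0 hHJBU u hu x hx hxl hI
    rw [hx0] at this
    rw [hWx]
    exact this
  · rw [integral_undef hI] at hWx
    have hx0' : x₀ = 0 := by
      by_contra hne
      exact absurd hWx (hWpos x₀ hne).ne'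
    rw [hx0', hU0, hW0]

/-- Uniqueness of the class-`P` solution to the HJB equation: two `C¹`, positive
definite, proper solutions of `H(V) = 0`, each inducing a globally asymptotically
stable closed loop whose cost it equals, must coincide. -/
theorem hjb_class_P_solution_unique {n m : ℕ}
    (f : (Fin n → ℝ) → (Fin n → ℝ)) (hfc : Continuous f)
    (g : (Fin n → ℝ) → Matrix (Fin n) (Fin m) ℝ)
    (hgc : ∀ i j, Continuous fun y => g y i j)
    (R : Matrix (Fin m) (Fin m) ℝ) (hRsymm : R.IsSymm) (hRpd : R.PosDef)
    (q : (Fin n → ℝ) → ℝ) (hqc : Continuous q)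
    (hq : q 0 = 0 ∧ ∀ y ≠ 0, 0 < q y)
    -- Hamiltonian and induced feedback
    (H : ((Fin n → ℝ) → ℝ) → (Fin n → ℝ) → ℝ)
    (hH : ∀ W y, H W y = grad W y ⬝ᵥ f y + q y
      - (1/4) * (grad W y ⬝ᵥ ((g y) *ᵥ (R⁻¹ *ᵥ ((g y)ᵀ *ᵥ grad W y)))))
    (ctrl : ((Fin n → ℝ) → ℝ) → (Fin n → ℝ) → (Fin m → ℝ))
    (hctrl : ∀ W y, ctrl W y = (-(1/2) : ℝ) • (R⁻¹ *ᵥ ((g y)ᵀ *ᵥ grad W y)))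
    -- the two class-P solutions
    (Vo Vhat : (Fin n → ℝ) → ℝ)
    (hVo : ContDiff ℝ 1 Vo) (hVo0 : Vo 0 = 0) (hVopos : ∀ y ≠ 0, 0 < Vo y)
    (hVoproper : Tendsto Vo (cocompact (Fin n → ℝ)) atTop)
    (hVhat : ContDiff ℝ 1 Vhat) (hVhat0 : Vhat 0 = 0) (hVhatpos : ∀ y ≠ 0, 0 < Vhat y)
    (hVhatproper : Tendsto Vhat (cocompact (Fin n → ℝ)) atTop)
    (hHJBo : ∀ y, H Vo y = 0) (hHJBhat : ∀ y, H Vhat y = 0)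
    -- each induced closed loop is globally asymptotically stable
    (hGASo : GloballyAsymptoticallyStable (fun y => f y + (g y) *ᵥ ctrl Vo y))
    (hGAShat : GloballyAsymptoticallyStable (fun y => f y + (g y) *ᵥ ctrl Vhat y))
    -- closed-loop trajectories exist from every initial condition
    (hexist : ∀ W ∈ ({Vo, Vhat} : Set ((Fin n → ℝ) → ℝ)), ∀ x₀ : Fin n → ℝ,
      ∃ x : ℝ → (Fin n → ℝ),
        (∀ t, HasDerivAt x (f (x t) + (g (x t)) *ᵥ ctrl W (x t)) t) ∧
        x 0 = x₀ ∧ Tendsto x atTop (nhds 0))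
    -- each function equals the cost of its induced policy
    (hcost : ∀ W ∈ ({Vo, Vhat} : Set ((Fin n → ℝ) → ℝ)),
      ∀ (x₀ : Fin n → ℝ) (x : ℝ → (Fin n → ℝ)),
        (∀ t, HasDerivAt x (f (x t) + (g (x t)) *ᵥ ctrl W (x t)) t) → x 0 = x₀ →
        Tendsto x atTop (nhds 0) →
        W x₀ = ∫ t in Set.Ioi (0:ℝ),
          (q (x t) + ctrl W (x t) ⬝ᵥ (R *ᵥ ctrl W (x t)))) :
    ∀ y : Fin n → ℝ, Vo y = Vhat y := by
  have hq0 : ∀ z, 0 ≤ q z := by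
    intro z
    by_cases hz : z = 0
    · simp [hz, hq.1]
    · exact (hq.2 z hz).le
  have hHJB' : ∀ (W : (Fin n → ℝ) → ℝ), (∀ z, H W z = 0) → ∀ z,
      grad W z ⬝ᵥ f z + q z
        - (1/4) * (grad W z ⬝ᵥ (g z *ᵥ (R⁻¹ *ᵥ ((g z)ᵀ *ᵥ grad W z)))) = 0 := by
    intro W hW z
    rw [← hH W z]
    exact hW z
  have hctrl_cont : ∀ (W : (Fin n → ℝ) → ℝ), ContDiff ℝ 1 W → Continuous (ctrl W) := by
    intro W hWc
    have hEq : ctrl W = fun y => (-(1/2) : ℝ) • (R⁻¹ *ᵥ ((g y)ᵀ *ᵥ grad W y)) :=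
      funext (hctrl W)
    rw [hEq]
    exact Continuous.fun_const_smul
      (cont_mulVec (M := fun _ => R⁻¹) (fun i j => continuous_const)
        (cont_mulVec (fun i j => (hgc j i)) (grad_continuous hWc))) _
  have hmemo : Vo ∈ ({Vo, Vhat} : Set ((Fin n → ℝ) → ℝ)) := Set.mem_insert _ _
  have hmemh : Vhat ∈ ({Vo, Vhat} : Set ((Fin n → ℝ) → ℝ)) :=
    Set.mem_insert_iff.mpr (Or.inr rfl)
  intro y
  refine le_antisymm ?_ ?_
  · obtain ⟨x, hx, hx0, hxl⟩ := hexist Vhat hmemh y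
    have hWx := hcost Vhat hmemh y x hx hx0 hxl
    have hxd : ∀ t, HasDerivAt x (f (x t) + g (x t) *ᵥ (ctrl Vhat) (x t)) t := hx
    exact le_of_cost f hfc g hgc R hRsymm hRpd q hqc hq0 Vo hVo hVo0
      (hHJB' Vo hHJBo) Vhat hVhat0 hVhatpos (ctrl Vhat) (hctrl_cont Vhat hVhat)
      y x hxd hx0 hxl hWx
  · obtain ⟨x, hx, hx0, hxl⟩ := hexist Vo hmemo y
    have hWx := hcost Vo hmemo y x hx hx0 hxl
    have hxd : ∀ t, HasDerivAt x (f (x t) + g (x t) *ᵥ (ctrl Vo) (x t)) t := hx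
    exact le_of_cost f hfc g hgc R hRsymm hRpd q hqc hq0 Vhat hVhat hVhat0
      (hHJB' Vhat hHJBhat) Vo hVo0 hVopos (ctrl Vo) (hctrl_cont Vo hVo)
      y x hxd hx0 hxl hWx
end

section
/- Policy evaluation dominates the optimal value: let u_i be a globally stabilizing control policy and V_i ∈ C¹ with V_i(0)=0 satisfy L(V_i, u_i)(x) = 0 for all x. Assume V° ∈ P satisfies the HJB equation H(V°)=0 with optimal feedback u° = -(1/2)R⁻¹gᵀ∇V°. Then V_i(x) ≥ V°(x) for all x ∈ R^n, and moreover V_i(x₀) - V°(x₀) = ∫₀^∞ |u_i(x(t)) - u°(x(t))|_R² dt along the closed-loop trajectory with u = u_i starting at x₀. -/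
open Matrix Filter MeasureTheory

/-- A continuous linear functional on `Fin n → ℝ` is given by dot product with its
values on the basis vectors. -/
lemma clm_eq_dot {n : ℕ} (L : (Fin n → ℝ) →L[ℝ] ℝ) (v : Fin n → ℝ) :
    L v = (fun i => L (Pi.single i 1)) ⬝ᵥ v := by
  have hv : v = ∑ i : Fin n, Pi.single i (v i) := (Finset.univ_sum_single v).symm
  conv_lhs => rw [hv]
  rw [map_sum, dotProduct]
  refine Finset.sum_congr rfl fun i _ => ?_
  have : Pi.single i (v i) = v i • (Pi.single i 1 : Fin n → ℝ) := by
    funext j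
    rcases eq_or_ne j i with rfl | h
    · simp
    · simp [Pi.single_eq_of_ne h]
  rw [this, L.map_smul, smul_eq_mul, mul_comm]

/-- Chain rule: derivative of `V ∘ x` as a dot product with the gradient. -/
lemma hasDerivAt_comp_grad {n : ℕ} {V : (Fin n → ℝ) → ℝ} (hV : ContDiff ℝ 1 V)
    {x : ℝ → (Fin n → ℝ)} {x' : Fin n → ℝ} {t : ℝ} (hx : HasDerivAt x x' t) :
    HasDerivAt (fun s => V (x s)) (grad V (x t) ⬝ᵥ x') t := by
  have hF : HasFDerivAt V (fderiv ℝ V (x t)) (x t) :=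
    (hV.differentiable one_ne_zero (x t)).hasFDerivAt
  have := hF.comp_hasDerivAt t hx
  rw [clm_eq_dot (fderiv ℝ V (x t)) x'] at this
  exact this

/-- Policy evaluation dominates the optimal value: `V_i ≥ V°` pointwise, and
`V_i(x₀) - V°(x₀) = ∫₀^∞ |u_i - u°|²_R dt` along the closed-loop trajectory
with `u = u_i` starting at `x₀`. -/
theorem policy_evaluation_dominates_optimal_value {n m : ℕ}
    (f : (Fin n → ℝ) → (Fin n → ℝ)) (hfc : Continuous f)
    (g : (Fin n → ℝ) → Matrix (Fin n) (Fin m) ℝ)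
    (hgc : ∀ i j, Continuous fun y => g y i j)
    (R : Matrix (Fin m) (Fin m) ℝ) (hRsymm : R.IsSymm) (hRpd : R.PosDef)
    (q : (Fin n → ℝ) → ℝ) (hqc : Continuous q)
    (hq : q 0 = 0 ∧ ∀ y ≠ 0, 0 < q y)
    -- L(V,u)(x) and the Hamiltonian H(V)(x)
    (L : ((Fin n → ℝ) → ℝ) → ((Fin n → ℝ) → (Fin m → ℝ)) → (Fin n → ℝ) → ℝ)
    (hL : ∀ V u y, L V u y
      = -(grad V y ⬝ᵥ (f y + (g y) *ᵥ u y)) - q y - u y ⬝ᵥ (R *ᵥ u y))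
    (H : ((Fin n → ℝ) → ℝ) → (Fin n → ℝ) → ℝ)
    (hH : ∀ W y, H W y = grad W y ⬝ᵥ f y + q y
      - (1/4) * (grad W y ⬝ᵥ ((g y) *ᵥ (R⁻¹ *ᵥ ((g y)ᵀ *ᵥ grad W y)))))
    -- the policy u_i, globally stabilizing, and its evaluation V_i
    (ui : (Fin n → ℝ) → (Fin m → ℝ))
    (hGAS : GloballyAsymptoticallyStable (fun y => f y + (g y) *ᵥ ui y))
    (Vi : (Fin n → ℝ) → ℝ) (hVi : ContDiff ℝ 1 Vi) (hVi0 : Vi 0 = 0)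
    (heval : ∀ y, L Vi ui y = 0)
    -- V° ∈ P solves the HJB equation, with optimal feedback u°
    (Vo : (Fin n → ℝ) → ℝ) (hVo : ContDiff ℝ 1 Vo)
    (hVo0 : Vo 0 = 0) (hVopos : ∀ y ≠ 0, 0 < Vo y)
    (hVoproper : Tendsto Vo (cocompact (Fin n → ℝ)) atTop)
    (hHJB : ∀ y, H Vo y = 0)
    (uo : (Fin n → ℝ) → (Fin m → ℝ))
    (huo : ∀ y, uo y = (-(1/2) : ℝ) • (R⁻¹ *ᵥ ((g y)ᵀ *ᵥ grad Vo y)))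
    -- closed-loop trajectories of u = u_i exist from every initial condition
    (hexist : ∀ x₀ : Fin n → ℝ, ∃ x : ℝ → (Fin n → ℝ),
      (∀ t, HasDerivAt x (f (x t) + (g (x t)) *ᵥ ui (x t)) t) ∧
      x 0 = x₀ ∧ Tendsto x atTop (nhds 0)) :
    (∀ y : Fin n → ℝ, Vo y ≤ Vi y) ∧
    (∀ (x₀ : Fin n → ℝ) (x : ℝ → (Fin n → ℝ)),
      (∀ t, HasDerivAt x (f (x t) + (g (x t)) *ᵥ ui (x t)) t) → x 0 = x₀ →
      Tendsto x atTop (nhds 0) →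
      Vi x₀ - Vo x₀ = ∫ t in Set.Ioi (0:ℝ),
        ((ui (x t) - uo (x t)) ⬝ᵥ (R *ᵥ (ui (x t) - uo (x t))))) := by
  have hdet : IsUnit R.det := isUnit_iff_ne_zero.2 hRpd.det_pos.ne'
  have hRRinv : ∀ v : Fin m → ℝ, R *ᵥ (R⁻¹ *ᵥ v) = v := by
    intro v
    rw [Matrix.mulVec_mulVec, Matrix.mul_nonsing_inv _ hdet, Matrix.one_mulVec]
  have hsym : ∀ u w : Fin m → ℝ, u ⬝ᵥ (R *ᵥ w) = w ⬝ᵥ (R *ᵥ u) := by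
    intro u w
    rw [Matrix.dotProduct_mulVec, ← Matrix.mulVec_transpose, hRsymm.eq,
      dotProduct_comm]
  -- the key pointwise identity
  have key : ∀ y : Fin n → ℝ,
      grad Vi y ⬝ᵥ (f y + g y *ᵥ ui y) - grad Vo y ⬝ᵥ (f y + g y *ᵥ ui y)
        = -((ui y - uo y) ⬝ᵥ (R *ᵥ (ui y - uo y))) := by
    intro y
    set a := grad Vo y with ha
    set b := ui y with hb
    set c := (g y)ᵀ *ᵥ a with hc
    have hdotgc : ∀ v : Fin m → ℝ, a ⬝ᵥ (g y *ᵥ v) = c ⬝ᵥ v := by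
      intro v
      rw [Matrix.dotProduct_mulVec, ← Matrix.mulVec_transpose, hc]
    have h1 : grad Vi y ⬝ᵥ (f y + g y *ᵥ b) = -(q y) - b ⬝ᵥ (R *ᵥ b) := by
      have := heval y
      rw [hL] at this
      linarith
    have h2 : a ⬝ᵥ (f y + g y *ᵥ b)
        = -(q y) + (1/4) * (c ⬝ᵥ (R⁻¹ *ᵥ c)) + c ⬝ᵥ b := by
      have hh := hHJB y
      rw [hH] at hh
      rw [dotProduct_add, hdotgc b]
      rw [hdotgc (R⁻¹ *ᵥ c)] at hh
      linarith
    have hRuo : R *ᵥ uo y = (-(1/2) : ℝ) • c := by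
      rw [huo y, Matrix.mulVec_smul, hRRinv]
    have h3 : (b - uo y) ⬝ᵥ (R *ᵥ (b - uo y))
        = b ⬝ᵥ (R *ᵥ b) + c ⬝ᵥ b + (1/4) * (c ⬝ᵥ (R⁻¹ *ᵥ c)) := by
      have e1 : b ⬝ᵥ (R *ᵥ uo y) = -(1/2) * (c ⬝ᵥ b) := by
        rw [hRuo, dotProduct_smul, smul_eq_mul, dotProduct_comm]
      have e2 : uo y ⬝ᵥ (R *ᵥ b) = -(1/2) * (c ⬝ᵥ b) := by
        rw [hsym, e1]
      have e3 : uo y ⬝ᵥ (R *ᵥ uo y) = (1/4) * (c ⬝ᵥ (R⁻¹ *ᵥ c)) := by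
        rw [hRuo, dotProduct_smul, huo y, smul_dotProduct,
          smul_eq_mul, smul_eq_mul, dotProduct_comm]
        ring
      rw [sub_dotProduct, Matrix.mulVec_sub, dotProduct_sub,
        dotProduct_sub, e1, e2, e3]
      ring
    rw [h1, h2, h3]
    ring
  -- nonnegativity of the quadratic form
  have hquad : ∀ v : Fin m → ℝ, 0 ≤ v ⬝ᵥ (R *ᵥ v) := by
    intro v
    simpa using hRpd.posSemidef.dotProduct_mulVec_nonneg v
  -- the main integral identity along an arbitrary closed-loop trajectory
  have main : ∀ (x₀ : Fin n → ℝ) (x : ℝ → (Fin n → ℝ)),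
      (∀ t, HasDerivAt x (f (x t) + (g (x t)) *ᵥ ui (x t)) t) → x 0 = x₀ →
      Tendsto x atTop (nhds 0) →
      Vi x₀ - Vo x₀ = ∫ t in Set.Ioi (0:ℝ),
        ((ui (x t) - uo (x t)) ⬝ᵥ (R *ᵥ (ui (x t) - uo (x t)))) := by
    intro x₀ x hx hx0 hxlim
    set P : ℝ → ℝ := fun t => (ui (x t) - uo (x t)) ⬝ᵥ (R *ᵥ (ui (x t) - uo (x t)))
      with hP
    have hderiv : ∀ t : ℝ, HasDerivAt (fun s => Vi (x s) - Vo (x s)) (-(P t)) t := by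
      intro t
      have h1 := hasDerivAt_comp_grad hVi (hx t)
      have h2 := hasDerivAt_comp_grad hVo (hx t)
      have := h1.sub h2
      rwa [key (x t)] at this
    have hlim : Tendsto (fun s => Vi (x s) - Vo (x s)) atTop (nhds 0) := by
      have h1 : Tendsto (fun s => Vi (x s)) atTop (nhds (Vi 0)) :=
        (hVi.continuous.tendsto 0).comp hxlim
      have h2 : Tendsto (fun s => Vo (x s)) atTop (nhds (Vo 0)) :=
        (hVo.continuous.tendsto 0).comp hxlim
      have := h1.sub h2
      rwa [hVi0, hVo0, sub_zero] at this
    have hint : (∫ t in Set.Ioi (0:ℝ), -(P t)) = 0 - (Vi (x 0) - Vo (x 0)) :=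
      integral_Ioi_of_hasDerivAt_of_nonpos'
        (fun t _ => hderiv t)
        (fun t _ => neg_nonpos_of_nonneg (hquad _)) hlim
    rw [integral_neg] at hint
    rw [← hx0]
    linarith [hint]
  refine ⟨?_, main⟩
  intro y
  obtain ⟨x, hx, hx0, hxlim⟩ := hexist y
  have h := main y x hx hx0 hxlim
  have hnn : 0 ≤ ∫ t in Set.Ioi (0:ℝ),
      ((ui (x t) - uo (x t)) ⬝ᵥ (R *ᵥ (ui (x t) - uo (x t)))) :=
    setIntegral_nonneg measurableSet_Ioi (fun t _ => hquad _)
  linarith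
end
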